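/- (Karlsson–Minton vanishing sum.) Let r ∈ ℕ, let m1, …, mr ∈ ℕ, let B1, …, Br ∈ ℂ with Bj ∉ {0, −1, −2, …} for each j, and let A ∈ ℂ with Re(A) + m1 + ⋯ + mr < 0. Then the series Σ_{k=0}^{∞} [(A)_k ∏_{j=1}^{r} (Bj+mj)_k] / [k! ∏_{j=1}^{r} (Bj)_k] converges absolutely and its sum equals 0. -/

import Mathlib

open Finset

/-- Pochhammer symbol `(a)_k = a (a+1) ⋯ (a+k-1)`. -/
noncomputable def poch (a : ℂ) (k : ℕ) : ℂ := ∏ i ∈ Finset.range k, (a + i)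

/-- The Wilson polynomial `W_n(z; t1,t2,t3,t4)` in the variable `z` (with `x = -z²`). -/
noncomputable def wilson (n : ℕ) (z t1 t2 t3 t4 : ℂ) : ℂ :=
  poch (t1 + t2) n * poch (t1 + t3) n * poch (t1 + t4) n *
    ∑ k ∈ Finset.range (n + 1),
      (poch (-(n : ℂ)) k * poch (t1 + t2 + t3 + t4 + (n : ℂ) - 1) k *
        poch (t1 + z) k * poch (t1 - z) k) /
      ((k.factorial : ℂ) * poch (t1 + t2) k * poch (t1 + t3) k * poch (t1 + t4) k)

open Filter Polynomial


lemma poch_zero (a : ℂ) : poch a 0 = 1 := by simp [poch]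

lemma poch_succ (a : ℂ) (k : ℕ) : poch a (k+1) = poch a k * (a + k) := by
  simp [poch, Finset.prod_range_succ]

lemma poch_add (a : ℂ) (m k : ℕ) : poch a (m + k) = poch a m * poch (a + m) k := by
  rw [poch, poch, poch, Finset.prod_range_add]
  congr 1
  refine Finset.prod_congr rfl fun i _ => ?_
  push_cast; ring

lemma poch_ne_zero {a : ℂ} (h : ∀ n : ℕ, a + n ≠ 0) (k : ℕ) : poch a k ≠ 0 :=
  Finset.prod_ne_zero_iff.mpr fun i _ => h i

lemma poch_shift (a : ℂ) (N : ℕ) : poch a N * (a + N) = a * poch (a+1) N := by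
  have h := poch_add a 1 N
  rw [Nat.add_comm 1 N, poch_succ] at h
  simpa [poch_succ, poch_zero] using h

lemma poch_telescope (a : ℂ) (N : ℕ) :
    ∑ j ∈ range (N+1), poch a j / (j.factorial : ℂ) = poch (a+1) N / (N.factorial : ℂ) := by
  induction N with
  | zero => simp [poch_zero]
  | succ N ih =>
    rw [Finset.sum_range_succ, ih, poch_succ, poch_succ]
    have h1 : ((N+1).factorial : ℂ) = (N.factorial : ℂ) * (N+1) := by
      rw [Nat.factorial_succ]; push_cast; ring
    have h2 : (N.factorial : ℂ) ≠ 0 := Nat.cast_ne_zero.mpr N.factorial_ne_zero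
    have h3 : ((N:ℂ)+1) ≠ 0 := by
      have := Nat.cast_ne_zero (R := ℂ).mpr (Nat.succ_ne_zero N)
      push_cast at this; exact this
    rw [poch_shift a N]
    rw [h1]; field_simp
    ring


lemma q_tendsto {a : ℂ} (ha : a.re < 0) :
    Tendsto (fun N => ∏ i ∈ range N, (‖a + 1 + (i:ℂ)‖ / ((i:ℝ)+1))) atTop (nhds 0) := by
  set q : ℕ → ℝ := fun N => ∏ i ∈ range N, (‖a + 1 + (i:ℂ)‖ / ((i:ℝ)+1)) with hq
  have hq0 : ∀ N, 0 ≤ q N := fun N =>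
    Finset.prod_nonneg fun i _ => div_nonneg (norm_nonneg _) (by positivity)
  set c : ℝ := a.re^2 + a.im^2 with hc
  have hterm : ∀ i : ℕ, (‖a + 1 + (i:ℂ)‖ / ((i:ℝ)+1))^2
      = 1 + (2*a.re/((i:ℝ)+1) + c/((i:ℝ)+1)^2) := by
    intro i
    have hi : (0:ℝ) < (i:ℝ)+1 := by positivity
    have hnorm : ‖a + 1 + (i:ℂ)‖^2 = ((i:ℝ)+1)^2 + 2*a.re*((i:ℝ)+1) + c := by
      rw [Complex.sq_norm, Complex.normSq_apply]
      simp [Complex.add_re, Complex.add_im, hc]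
      ring
    rw [div_pow, hnorm]
    field_simp
    ring
  have hC : Summable (fun i : ℕ => 1/((i:ℝ)+1)^2) := by
    have h2 : Summable (fun i : ℕ => 1/((i:ℝ))^2) := by
      exact_mod_cast Real.summable_one_div_nat_pow.mpr one_lt_two
    have := (summable_nat_add_iff 1).2 h2
    simpa using this
  set C : ℝ := ∑' i : ℕ, 1/((i:ℝ)+1)^2 with hCdef
  have hsum_le : ∀ N, ∑ i ∈ range N, (1/((i:ℝ)+1)^2) ≤ C :=
    fun N => Summable.sum_le_tsum (range N) (fun i _ => by positivity) hC
  have hbound : ∀ N, (q N)^2 ≤ Real.exp (2*a.re * (∑ i ∈ range N, (1/((i:ℝ)+1)))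
      + c * C) := by
    intro N
    have h1 : (q N)^2 = ∏ i ∈ range N, (‖a + 1 + (i:ℂ)‖ / ((i:ℝ)+1))^2 := by
      rw [hq, ← Finset.prod_pow]
    have h2 : (q N)^2 ≤ ∏ i ∈ range N, Real.exp (2*a.re/((i:ℝ)+1) + c/((i:ℝ)+1)^2) := by
      rw [h1]
      refine Finset.prod_le_prod (fun i _ => by positivity) (fun i _ => ?_)
      rw [hterm i]
      linarith [Real.add_one_le_exp (2*a.re/((i:ℝ)+1) + c/((i:ℝ)+1)^2)]
    rw [← Real.exp_sum] at h2
    refine h2.trans (Real.exp_le_exp.mpr ?_)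
    rw [Finset.sum_add_distrib]
    have hc0 : 0 ≤ c := by positivity
    have e1 : ∑ i ∈ range N, c/((i:ℝ)+1)^2 = c * ∑ i ∈ range N, 1/((i:ℝ)+1)^2 := by
      rw [Finset.mul_sum]; exact Finset.sum_congr rfl fun i _ => by ring
    have e2 : ∑ i ∈ range N, 2*a.re/((i:ℝ)+1) = 2*a.re * ∑ i ∈ range N, 1/((i:ℝ)+1) := by
      rw [Finset.mul_sum]; exact Finset.sum_congr rfl fun i _ => by ring
    have e3 := mul_le_mul_of_nonneg_left (hsum_le N) hc0
    rw [e1, e2]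
    linarith
  have hexp : Tendsto (fun N => Real.exp (2*a.re * (∑ i ∈ range N, (1/((i:ℝ)+1))) + c * C))
      atTop (nhds 0) := by
    apply Real.tendsto_exp_atBot.comp
    apply Filter.tendsto_atBot_add_const_right
    have h2a : (2*a.re) < 0 := by linarith
    exact (tendsto_const_mul_atBot_of_neg h2a).2 Real.tendsto_sum_range_one_div_nat_succ_atTop
  have hsq0 : Tendsto (fun N => (q N)^2) atTop (nhds 0) :=
    squeeze_zero (fun N => by positivity) hbound hexp
  have hs : Tendsto (fun N => Real.sqrt ((q N)^2)) atTop (nhds 0) := by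
    have := (Real.continuous_sqrt.tendsto 0).comp hsq0
    simpa [Function.comp_def] using this
  refine hs.congr fun N => ?_
  exact Real.sqrt_sq (hq0 N)

lemma norm_poch_div_factorial (a : ℂ) (N : ℕ) :
    ‖poch (a+1) N / (N.factorial : ℂ)‖ = ∏ i ∈ range N, (‖a + 1 + (i:ℂ)‖ / ((i:ℝ)+1)) := by
  rw [norm_div, poch, norm_prod]
  have hfac : ‖(N.factorial : ℂ)‖ = ∏ i ∈ range N, ((i:ℝ)+1) := by
    rw [Complex.norm_natCast]
    induction N with
    | zero => simp
    | succ n ih =>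
      rw [Finset.prod_range_succ, ← ih, Nat.factorial_succ]
      push_cast; ring
  rw [hfac, ← Finset.prod_div_distrib]

lemma tendsto_poch_div_factorial {a : ℂ} (ha : a.re < 0) :
    Tendsto (fun N => poch (a+1) N / (N.factorial : ℂ)) atTop (nhds 0) := by
  rw [tendsto_zero_iff_norm_tendsto_zero]
  exact (q_tendsto ha).congr fun N => (norm_poch_div_factorial a N).symm


lemma ratio_summable {b d : ℝ} (hb : 0 < b) (hd : 1 < d) :
    Summable (fun k : ℕ => ∏ i ∈ range k, ((b+i)/(b+d+i))) := by
  set H : ℕ → ℝ := fun k => ∏ i ∈ range k, ((b+i)/(b+d+i)) with hH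
  have hH0 : ∀ k, 0 ≤ H k := fun k =>
    Finset.prod_nonneg fun i _ => div_nonneg (by positivity) (by positivity)
  set T : ℕ → ℝ := fun k => (b+d-1+k) * H k with hT
  have hTnn : ∀ k, 0 ≤ T k := fun k =>
    mul_nonneg (by have := (Nat.cast_nonneg k : (0:ℝ) ≤ k); nlinarith) (hH0 k)
  have hstep : ∀ k, T k - T (k+1) = (d-1) * H k := by
    intro k
    have hne : b+d+(k:ℝ) ≠ 0 := by positivity
    have hHs : H (k+1) = H k * ((b+k)/(b+d+k)) := by
      rw [hH]; exact Finset.prod_range_succ _ k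
    rw [hT]
    simp only [hHs]
    push_cast
    field_simp
    ring
  apply summable_of_sum_range_le (c := T 0 / (d-1)) (fun k => hH0 k)
  intro n
  have htel : ∑ k ∈ range n, (T k - T (k+1)) = T 0 - T n := Finset.sum_range_sub' T n
  have : (d-1) * ∑ k ∈ range n, H k = T 0 - T n := by
    rw [← htel, Finset.mul_sum]
    exact Finset.sum_congr rfl fun k _ => (hstep k).symm
  rw [le_div_iff₀ (by linarith : (0:ℝ) < d - 1)]
  nlinarith [hTnn n]

lemma factorial_shift (i0 k : ℕ) :
    ((i0+k).factorial : ℝ) = (i0.factorial : ℝ) * ∏ i ∈ range k, ((i0:ℝ)+1+i) := by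
  induction k with
  | zero => simp
  | succ k ih =>
    rw [← Nat.add_assoc, Nat.factorial_succ, Finset.prod_range_succ, ← mul_assoc, ← ih]
    push_cast; ring

lemma summable_norm_poch {a : ℂ} (ha : a.re < 0) :
    Summable (fun k : ℕ => ‖poch a k‖ / (k.factorial : ℝ)) := by
  -- choose i0
  have hev : ∀ᶠ i : ℕ in atTop, (1 ≤ i ∧ 0 < (i:ℝ) + a.re/2) ∧
      a.im^2 ≤ (-a.re/2) * (2*(i:ℝ) + 3*a.re/2) := by
    have t1 : Tendsto (fun i : ℕ => (-a.re/2) * (2*(i:ℝ) + 3*a.re/2)) atTop atTop := by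
      apply Tendsto.const_mul_atTop (by linarith : (0:ℝ) < -a.re/2)
      apply tendsto_atTop_add_const_right
      exact (tendsto_natCast_atTop_atTop (R := ℝ)).const_mul_atTop two_pos
    have t2 : Tendsto (fun i : ℕ => (i:ℝ) + a.re/2) atTop atTop :=
      tendsto_atTop_add_const_right _ _ (tendsto_natCast_atTop_atTop (R := ℝ))
    filter_upwards [eventually_ge_atTop 1, t2.eventually_gt_atTop 0,
      t1.eventually_ge_atTop (a.im^2)] with i h1 h2 h3
    exact ⟨⟨h1, h2⟩, h3⟩
  obtain ⟨i0, hi0⟩ := eventually_atTop.mp hev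
  have hi01 : 1 ≤ i0 := (hi0 i0 le_rfl).1.1
  have hb : 0 < (i0:ℝ) + a.re/2 := (hi0 i0 le_rfl).1.2
  set b : ℝ := (i0:ℝ) + a.re/2 with hbdef
  set d : ℝ := 1 - a.re/2 with hddef
  have hd : 1 < d := by rw [hddef]; linarith
  -- key pointwise bound for i ≥ i0
  have hkey : ∀ i : ℕ, i0 ≤ i → ‖a + (i:ℂ)‖ ≤ (i:ℝ) + a.re/2 := by
    intro i hi
    have h2 := (hi0 i hi).2
    have hpos : 0 < (i:ℝ) + a.re/2 := (hi0 i hi).1.2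
    have hsq : ‖a + (i:ℂ)‖^2 ≤ ((i:ℝ) + a.re/2)^2 := by
      rw [Complex.sq_norm, Complex.normSq_apply]
      simp only [Complex.add_re, Complex.add_im, Complex.natCast_re, Complex.natCast_im]
      nlinarith
    calc ‖a + (i:ℂ)‖ = Real.sqrt (‖a + (i:ℂ)‖^2) := (Real.sqrt_sq (norm_nonneg _)).symm
      _ ≤ Real.sqrt (((i:ℝ) + a.re/2)^2) := Real.sqrt_le_sqrt hsq
      _ = (i:ℝ) + a.re/2 := Real.sqrt_sq hpos.le
  -- reduce to shifted sequence
  rw [← summable_nat_add_iff i0]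
  set C : ℝ := ‖poch a i0‖ / (i0.factorial : ℝ) with hC
  have hbound : ∀ k : ℕ, ‖poch a (k + i0)‖ / ((k + i0).factorial : ℝ)
      ≤ C * ∏ i ∈ range k, ((b+i)/(b+d+i)) := by
    intro k
    rw [Nat.add_comm k i0, poch_add, factorial_shift, norm_mul]
    have hfs : (0:ℝ) < (i0.factorial : ℝ) := by positivity
    have e1 : ‖poch a i0‖ * ‖poch (a + i0) k‖ / ((i0.factorial:ℝ) * ∏ i ∈ range k, ((i0:ℝ)+1+i))
        = C * (‖poch (a + i0) k‖ / ∏ i ∈ range k, ((i0:ℝ)+1+i)) := by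
      rw [hC]; field_simp
    rw [e1]
    have hCnn : 0 ≤ C := by positivity
    refine mul_le_mul_of_nonneg_left ?_ hCnn
    have e2 : ‖poch (a + (i0:ℂ)) k‖ / ∏ i ∈ range k, ((i0:ℝ)+1+i)
        = ∏ i ∈ range k, (‖a + (i0:ℂ) + i‖ / ((i0:ℝ)+1+i)) := by
      rw [poch, norm_prod, ← Finset.prod_div_distrib]
    rw [e2]
    refine Finset.prod_le_prod (fun i _ => by positivity) (fun i _ => ?_)
    have hden : b + d + (i:ℝ) = (i0:ℝ)+1+i := by rw [hbdef, hddef]; ring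
    rw [← hden]
    have hi : ‖a + (i0:ℂ) + (i:ℂ)‖ ≤ b + i := by
      have hk := hkey (i0 + i) (Nat.le_add_right _ _)
      have he : a + ((i0 + i : ℕ) : ℂ) = a + (i0:ℂ) + (i:ℂ) := by push_cast; ring
      rw [he] at hk
      rw [hbdef]
      push_cast at hk ⊢
      linarith
    gcongr
  refine Summable.of_nonneg_of_le (fun k => by positivity) hbound ?_
  exact (ratio_summable hb hd).mul_left C


lemma summable_poch_div_factorial {a : ℂ} (ha : a.re < 0) :
    Summable (fun k : ℕ => ‖poch a k / (k.factorial : ℂ)‖) :=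
  (summable_norm_poch ha).congr fun k => by
    rw [norm_div, Complex.norm_natCast]

lemma tsum_poch_div_factorial {a : ℂ} (ha : a.re < 0) :
    ∑' k : ℕ, poch a k / (k.factorial : ℂ) = 0 := by
  have hs : Summable (fun k : ℕ => poch a k / (k.factorial : ℂ)) :=
    Summable.of_norm (summable_poch_div_factorial ha)
  have h1 := hs.hasSum.tendsto_sum_nat
  have h2 : Tendsto (fun N : ℕ => ∑ j ∈ range (N+1), poch a j / (j.factorial : ℂ)) atTop
      (nhds (∑' k : ℕ, poch a k / (k.factorial : ℂ))) :=
    h1.comp (tendsto_add_atTop_nat 1)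
  have h3 : Tendsto (fun N : ℕ => ∑ j ∈ range (N+1), poch a j / (j.factorial : ℂ)) atTop
      (nhds 0) :=
    (tendsto_poch_div_factorial ha).congr fun N => (poch_telescope a N).symm
  exact tendsto_nhds_unique h2 h3

-- the building blocks f_i
lemma fblock_eq (A : ℂ) (i j : ℕ) :
    poch A (i+j) * ((i+j).descFactorial i : ℂ) / ((i+j).factorial : ℂ)
      = poch A i * (poch (A + i) j / (j.factorial : ℂ)) := by
  have hd : (j.factorial : ℂ) * ((i+j).descFactorial i : ℂ) = ((i+j).factorial : ℂ) := by
    have := Nat.factorial_mul_descFactorial (Nat.le_add_right i j)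
    rw [Nat.add_sub_cancel_left] at this
    exact_mod_cast this
  have hf : ((i+j).factorial : ℂ) ≠ 0 := Nat.cast_ne_zero.mpr (Nat.factorial_ne_zero _)
  have hjf : (j.factorial : ℂ) ≠ 0 := Nat.cast_ne_zero.mpr (Nat.factorial_ne_zero _)
  rw [poch_add]
  field_simp [← hd]
  rw [← hd]; ring

lemma fblock_summable {A : ℂ} {i : ℕ} (hi : A.re + i < 0) :
    Summable (fun k : ℕ => ‖poch A k * (k.descFactorial i : ℂ) / (k.factorial : ℂ)‖) := by
  rw [← summable_nat_add_iff i]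
  have hre : (A + (i:ℂ)).re < 0 := by
    simp only [Complex.add_re, Complex.natCast_re]; exact hi
  refine (((summable_poch_div_factorial hre).mul_left ‖poch A i‖).congr fun j => ?_)
  rw [Nat.add_comm j i, fblock_eq A i j, norm_mul]

lemma fblock_tsum {A : ℂ} {i : ℕ} (hi : A.re + i < 0) :
    ∑' k : ℕ, poch A k * (k.descFactorial i : ℂ) / (k.factorial : ℂ) = 0 := by
  have hre : (A + (i:ℂ)).re < 0 := by
    simp only [Complex.add_re, Complex.natCast_re]; exact hi
  have hs : Summable (fun k : ℕ => poch A k * (k.descFactorial i : ℂ) / (k.factorial : ℂ)) :=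
    Summable.of_norm (fblock_summable hi)
  have key := (Summable.sum_add_tsum_nat_add i hs).symm
  have h1 : ∑ k ∈ range i, poch A k * (k.descFactorial i : ℂ) / (k.factorial : ℂ) = 0 := by
    refine Finset.sum_eq_zero fun k hk => ?_
    rw [Nat.descFactorial_eq_zero_iff_lt.mpr (Finset.mem_range.mp hk)]
    simp
  have h2 : ∑' j : ℕ, poch A (j+i) * ((j+i).descFactorial i : ℂ) / ((j+i).factorial : ℂ)
      = poch A i * ∑' j : ℕ, poch (A + i) j / (j.factorial : ℂ) := by
    rw [← tsum_mul_left]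
    exact tsum_congr fun j => by rw [Nat.add_comm j i, fblock_eq A i j]
  rw [key, h1, zero_add, h2, tsum_poch_div_factorial hre, mul_zero]

-- polynomial basis lemma
lemma exists_desc_basis (n : ℕ) : ∀ P : ℂ[X], P.natDegree ≤ n →
    ∃ c : ℕ → ℂ, P = ∑ i ∈ range (n+1), Polynomial.C (c i) * descPochhammer ℂ i := by
  induction n with
  | zero =>
    intro P hP
    refine ⟨fun _ => P.coeff 0, ?_⟩
    have := Polynomial.eq_C_of_natDegree_le_zero hP
    rw [this]
    simp [descPochhammer_zero]
  | succ n ih =>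
    intro P hP
    set Q := P - Polynomial.C (P.coeff (n+1)) * descPochhammer ℂ (n+1) with hQ
    have hdesc : (descPochhammer ℂ (n+1)).natDegree = n+1 := descPochhammer_natDegree ℂ (n+1)
    have hmonic : (descPochhammer ℂ (n+1)).Monic := monic_descPochhammer _ _
    have hQdeg : Q.natDegree ≤ n := by
      rw [Polynomial.natDegree_le_iff_coeff_eq_zero]
      intro m hm
      rw [hQ, Polynomial.coeff_sub, Polynomial.coeff_C_mul]
      rcases eq_or_lt_of_le (Nat.succ_le_of_lt hm) with h | h
      · rw [← h]
        have : (descPochhammer ℂ (n+1)).coeff (n+1) = 1 := by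
          have := hmonic.leadingCoeff
          rwa [Polynomial.leadingCoeff, hdesc] at this
        rw [this, mul_one, sub_self]
      · have hd1 : P.coeff m = 0 :=
          Polynomial.coeff_eq_zero_of_natDegree_lt (lt_of_le_of_lt hP h)
        have hd2 : (descPochhammer ℂ (n+1)).coeff m = 0 :=
          Polynomial.coeff_eq_zero_of_natDegree_lt (by rw [hdesc]; exact h)
        rw [hd1, hd2, mul_zero, sub_zero]
    obtain ⟨c, hc⟩ := ih Q hQdeg
    refine ⟨fun i => if i = n+1 then P.coeff (n+1) else c i, ?_⟩
    rw [Finset.sum_range_succ]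
    have hsum : ∑ i ∈ range (n+1), Polynomial.C
        (if i = n+1 then P.coeff (n+1) else c i) * descPochhammer ℂ i
        = ∑ i ∈ range (n+1), Polynomial.C (c i) * descPochhammer ℂ i := by
      refine Finset.sum_congr rfl fun i hi => ?_
      rw [if_neg (Nat.ne_of_lt (Finset.mem_range.mp hi))]
    rw [hsum, ← hc]
    have hif : (if n+1 = n+1 then P.coeff (n+1) else c (n+1)) = P.coeff (n+1) := if_pos rfl
    show P = Q + Polynomial.C (if n+1 = n+1 then P.coeff (n+1) else c (n+1)) * descPochhammer ℂ (n+1)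
    rw [hif, hQ]
    ring


theorem karlsson_minton_vanishing (r : ℕ) (m : Fin r → ℕ) (B : Fin r → ℂ)
    (hB : ∀ j : Fin r, ∀ k : ℕ, B j + k ≠ 0)
    (A : ℂ) (hA : A.re + ∑ j : Fin r, (m j : ℝ) < 0) :
    Summable (fun k : ℕ =>
        ‖(poch A k * ∏ j : Fin r, poch (B j + (m j : ℂ)) k) /
          ((k.factorial : ℂ) * ∏ j : Fin r, poch (B j) k)‖) ∧
    ∑' k : ℕ, (poch A k * ∏ j : Fin r, poch (B j + (m j : ℂ)) k) /
          ((k.factorial : ℂ) * ∏ j : Fin r, poch (B j) k) = 0 := by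
  set M : ℕ := ∑ j : Fin r, m j with hM
  have hAM : ∀ i : ℕ, i ≤ M → A.re + (i:ℝ) < 0 := by
    intro i hi
    have h1 : ((M:ℕ):ℝ) = ∑ j : Fin r, (m j : ℝ) := by push_cast [hM]; rfl
    have h2 : (i:ℝ) ≤ (M:ℝ) := Nat.cast_le.mpr hi
    linarith [h1 ▸ hA]
  -- the polynomial
  set P : ℂ[X] := ∏ j : Fin r, ∏ l ∈ range (m j), (X + Polynomial.C (B j + l)) with hP
  have hPdeg : P.natDegree ≤ M := by
    refine (Polynomial.natDegree_prod_le _ _).trans ?_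
    rw [hM]
    refine Finset.sum_le_sum fun j _ => ?_
    refine (Polynomial.natDegree_prod_le _ _).trans ?_
    have hstep : ∑ l ∈ range (m j), ((X : ℂ[X]) + Polynomial.C (B j + l)).natDegree
        ≤ ∑ l ∈ range (m j), 1 :=
      Finset.sum_le_sum fun l _ => le_of_eq (Polynomial.natDegree_X_add_C _)
    simpa using hstep
  obtain ⟨c, hc⟩ := exists_desc_basis M P hPdeg
  have hPeval : ∀ k : ℕ, P.eval (k:ℂ) = ∏ j : Fin r, poch (B j + k) (m j) := by
    intro k
    rw [hP, Polynomial.eval_prod]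
    refine Finset.prod_congr rfl fun j _ => ?_
    rw [Polynomial.eval_prod, poch]
    refine Finset.prod_congr rfl fun l _ => ?_
    simp [Polynomial.eval_add]
    ring
  have hPeval' : ∀ k : ℕ, P.eval (k:ℂ)
      = ∑ i ∈ range (M+1), c i * (k.descFactorial i : ℂ) := by
    intro k
    conv_lhs => rw [hc]
    rw [Polynomial.eval_finset_sum]
    refine Finset.sum_congr rfl fun i _ => ?_
    rw [Polynomial.eval_mul, Polynomial.eval_C, descPochhammer_eval_eq_descFactorial ℂ k i]
  set D : ℂ := ∏ j : Fin r, poch (B j) (m j) with hD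
  have hDne : D ≠ 0 := Finset.prod_ne_zero_iff.mpr fun j _ => poch_ne_zero (hB j) (m j)
  -- pointwise decomposition
  have hpoint : ∀ k : ℕ,
      (poch A k * ∏ j : Fin r, poch (B j + (m j : ℂ)) k) /
          ((k.factorial : ℂ) * ∏ j : Fin r, poch (B j) k)
      = ∑ i ∈ range (M+1),
          (c i / D) * (poch A k * (k.descFactorial i : ℂ) / (k.factorial : ℂ)) := by
    intro k
    have hfk : (k.factorial : ℂ) ≠ 0 := Nat.cast_ne_zero.mpr (Nat.factorial_ne_zero _)
    have hBk : (∏ j : Fin r, poch (B j) k) ≠ 0 :=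
      Finset.prod_ne_zero_iff.mpr fun j _ => poch_ne_zero (hB j) k
    have hrhs : ∑ i ∈ range (M+1),
          (c i / D) * (poch A k * (k.descFactorial i : ℂ) / (k.factorial : ℂ))
        = (poch A k / ((k.factorial : ℂ) * D)) *
            ∑ i ∈ range (M+1), c i * (k.descFactorial i : ℂ) := by
      rw [Finset.mul_sum]
      refine Finset.sum_congr rfl fun i _ => ?_
      field_simp
    rw [hrhs, ← hPeval', hPeval]
    have hprod : (∏ j : Fin r, poch (B j + (m j : ℂ)) k) * D
        = (∏ j : Fin r, poch (B j + k) (m j)) * ∏ j : Fin r, poch (B j) k := by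
      rw [hD, ← Finset.prod_mul_distrib, ← Finset.prod_mul_distrib]
      refine Finset.prod_congr rfl fun j _ => ?_
      have h1 := poch_add (B j) (m j) k
      have h2 := poch_add (B j) k (m j)
      rw [Nat.add_comm (m j) k] at h1
      rw [h2] at h1
      linear_combination -h1
    rw [div_mul_eq_mul_div, div_eq_div_iff (mul_ne_zero hfk hBk) (mul_ne_zero hfk hDne)]
    linear_combination (poch A k * (k.factorial:ℂ)) * hprod
  -- summability of each block
  have hblock : ∀ i ∈ range (M+1),
      Summable (fun k : ℕ =>
        (c i / D) * (poch A k * (k.descFactorial i : ℂ) / (k.factorial : ℂ))) := by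
    intro i hi
    have := fblock_summable (A := A) (i := i) (hAM i (Nat.lt_succ_iff.mp (Finset.mem_range.mp hi)))
    exact (Summable.of_norm this).mul_left _
  have hblocknorm : ∀ i ∈ range (M+1),
      Summable (fun k : ℕ =>
        ‖(c i / D) * (poch A k * (k.descFactorial i : ℂ) / (k.factorial : ℂ))‖) := by
    intro i hi
    have := fblock_summable (A := A) (i := i) (hAM i (Nat.lt_succ_iff.mp (Finset.mem_range.mp hi)))
    exact (this.mul_left ‖c i / D‖).congr fun k => (norm_mul _ _).symm
  constructor
  · refine Summable.of_nonneg_of_le (fun k => norm_nonneg _) (fun k => ?_)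
      (summable_sum fun i hi => hblocknorm i hi)
    rw [hpoint k]
    exact norm_sum_le _ _
  · rw [tsum_congr hpoint, Summable.tsum_finsetSum hblock]
    refine Finset.sum_eq_zero fun i hi => ?_
    rw [tsum_mul_left, fblock_tsum (hAM i (Nat.lt_succ_iff.mp (Finset.mem_range.mp hi))), mul_zero]
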